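/- In an undirected graph with positive edge weights, if vertices a, b, c appear in that order on some shortest path, then on any shortest path passing through all three of these vertices, b appears between a and c. -/

import Mathlib

/-- A graph with real edge weights that are strictly positive on edges. -/
structure WeightedGraph (V : Type*) where
  Adj : V → V → Prop
  w : V → V → ℝ
  pos : ∀ {u v : V}, Adj u v → 0 < w u v

namespace WeightedGraph

variable {V : Type*} (G : WeightedGraph V)

/-- The graph is undirected: adjacency and weights are symmetric. -/
def IsUndirected : Prop :=
  (∀ u v, G.Adj u v → G.Adj v u) ∧ (∀ u v, G.w u v = G.w v u)

/-- Total weight of a vertex sequence (sum of weights of consecutive pairs). -/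
def weight (l : List V) : ℝ :=
  ((l.zip l.tail).map fun p => G.w p.1 p.2).sum

/-- A (simple) path: a nonempty sequence of distinct vertices with consecutive
vertices adjacent. -/
def IsPath (l : List V) : Prop :=
  l ≠ [] ∧ l.Chain' G.Adj ∧ l.Nodup

/-- A path beginning at `u` and ending at `v`. -/
def IsPathFrom (l : List V) (u v : V) : Prop :=
  G.IsPath l ∧ l.head? = some u ∧ l.getLast? = some v

/-- A shortest path between its endpoints: a path whose total weight is at most
that of any path with the same endpoints. -/
def IsShortest (l : List V) : Prop :=
  G.IsPath l ∧ ∀ l', G.IsPath l' → l'.head? = l.head? → l'.getLast? = l.getLast? →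
    G.weight l ≤ G.weight l'

/-- Weighted graph distance from `u` to `v`. -/
noncomputable def dist (u v : V) : ℝ :=
  sInf {c : ℝ | ∃ l, G.IsPathFrom l u v ∧ G.weight l = c}

end WeightedGraph

/-- `v` is the first vertex of `P` lying in the set `S`. -/
def FirstIn {V : Type*} (P : List V) (S : Set V) (v : V) : Prop :=
  v ∈ S ∧ ∃ pre post : List V, P = pre ++ v :: post ∧ ∀ x ∈ pre, x ∉ S

/-- `v` is the last vertex of `P` lying in the set `S`. -/
def LastIn {V : Type*} (P : List V) (S : Set V) (v : V) : Prop :=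
  v ∈ S ∧ ∃ pre post : List V, P = pre ++ v :: post ∧ ∀ x ∈ post, x ∉ S

namespace SPO

open List WeightedGraph

variable {V : Type*} (G : WeightedGraph V)

lemma weight_nil : G.weight ([] : List V) = 0 := rfl

lemma weight_single (x : V) : G.weight [x] = 0 := rfl

lemma weight_cons_cons (x y : V) (l : List V) :
    G.weight (x :: y :: l) = G.w x y + G.weight (y :: l) := rfl

lemma weight_append_cons : ∀ (l₁ : List V) (x : V) (l₂ : List V),
    G.weight (l₁ ++ x :: l₂) = G.weight (l₁ ++ [x]) + G.weight (x :: l₂)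
  | [], x, l₂ => by simp [weight_single]
  | [a], x, l₂ => by simp [weight_cons_cons, weight_single]
  | a :: b :: t, x, l₂ => by
    have ih := weight_append_cons (b :: t) x l₂
    simp only [cons_append, weight_cons_cons] at *
    rw [ih]; ring

lemma weight_nonneg : ∀ {l : List V}, l.Chain' G.Adj → 0 ≤ G.weight l
  | [], _ => le_of_eq (weight_nil G).symm
  | [x], _ => le_of_eq (weight_single G x).symm
  | x :: y :: t, h => by
    unfold List.Chain' at h
    rw [isChain_cons_cons] at h
    have h1 := G.pos h.1
    have h2 := weight_nonneg (l := y :: t) h.2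
    rw [weight_cons_cons]; linarith

lemma weight_pos {x : V} {l : List V} (h : (x :: l).Chain' G.Adj) (hl : l ≠ []) :
    0 < G.weight (x :: l) := by
  obtain ⟨y, t, rfl⟩ := List.exists_cons_of_ne_nil hl
  unfold List.Chain' at h
  rw [isChain_cons_cons] at h
  have h1 := G.pos h.1
  have h2 := weight_nonneg G h.2
  rw [weight_cons_cons]; linarith

lemma weight_reverse (hw : ∀ u v, G.w u v = G.w v u) :
    ∀ l : List V, G.weight l.reverse = G.weight l
  | [] => rfl
  | [x] => rfl
  | x :: y :: t => by
    have ih := weight_reverse hw (y :: t)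
    have h2 : (x :: y :: t).reverse = (y :: t).reverse ++ [x] := by simp
    have h3 : (y :: t).reverse ++ [x] = t.reverse ++ y :: [x] := by simp
    have h4 : t.reverse ++ [y] = (y :: t).reverse := by simp
    rw [weight_cons_cons, ← ih, h2, h3, weight_append_cons, h4,
      weight_cons_cons, weight_single, hw y x]
    ring

lemma head?_append_cons (l₁ : List V) (x : V) (l₂ : List V) :
    (l₁ ++ x :: l₂).head? = (l₁ ++ [x]).head? := by cases l₁ <;> simp

lemma getLast?_append_cons (l₁ : List V) (x : V) (l₂ : List V) :
    (l₁ ++ x :: l₂).getLast? = (x :: l₂).getLast? := by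
  obtain ⟨v, hv⟩ := Option.isSome_iff_exists.mp
    (List.getLast?_isSome.mpr (List.cons_ne_nil x l₂))
  rw [List.getLast?_append, hv]; rfl

lemma sublist_split {x : V} {t l : List V} (h : (x :: t).Sublist l) :
    ∃ l₁ l₂, l = l₁ ++ x :: l₂ ∧ t.Sublist l₂ := by
  induction l with
  | nil => simp at h
  | cons a l' ih =>
    cases h with
    | cons _ h' =>
      obtain ⟨l₁, l₂, rfl, ht⟩ := ih h'
      exact ⟨a :: l₁, l₂, rfl, ht⟩
    | cons_cons _ h' => exact ⟨[], l', rfl, h'⟩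


lemma exists_path_le : ∀ (n : ℕ) (l : List V), l.length ≤ n → l ≠ [] → l.Chain' G.Adj →
    ∃ m, G.IsPath m ∧ m.head? = l.head? ∧ m.getLast? = l.getLast? ∧ G.weight m ≤ G.weight l := by
  intro n
  induction n with
  | zero =>
    intro l hlen hne _
    interval_cases h : l.length
    · exact absurd (List.length_eq_zero_iff.mp h) hne
  | succ n ih =>
    intro l hlen hne hc
    by_cases hnd : l.Nodup
    · exact ⟨l, ⟨hne, hc, hnd⟩, rfl, rfl, le_refl _⟩
    · obtain ⟨x, hx⟩ := List.exists_duplicate_iff_not_nodup.mpr hnd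
      obtain ⟨l₁, l₂', hl, h2⟩ := sublist_split (List.duplicate_iff_sublist.mp hx)
      obtain ⟨l₃, l₄, rfl, -⟩ := sublist_split h2
      subst hl
      -- l = l₁ ++ x :: (l₃ ++ x :: l₄)
      have hrw : l₁ ++ x :: (l₃ ++ x :: l₄) = l₁ ++ (x :: l₃ ++ [x]) ++ l₄ := by simp
      have hlen' : (l₁ ++ x :: l₄).length ≤ n := by
        simp only [List.length_append, List.length_cons] at hlen ⊢; omega
      have hne' : l₁ ++ x :: l₄ ≠ [] := by simp
      unfold List.Chain' at hc
      rw [List.isChain_append] at hc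
      obtain ⟨hc1, hc2, hcb⟩ := hc
      have hcmid : (x :: l₃ ++ [x]).Chain' G.Adj :=
        hc2.prefix (by exact ⟨l₄, by simp⟩)
      have hc4 : (x :: l₄).Chain' G.Adj :=
        hc2.suffix (by exact ⟨x :: l₃, by simp⟩)
      have hc' : (l₁ ++ x :: l₄).Chain' G.Adj := by
        unfold List.Chain'
        rw [List.isChain_append]
        exact ⟨hc1, hc4, fun u hu v hv => hcb u hu v (by simpa using hv)⟩
      obtain ⟨m, hm, hmh, hml, hmw⟩ := ih (l₁ ++ x :: l₄) hlen' hne' hc'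
      refine ⟨m, hm, ?_, ?_, ?_⟩
      · rw [hmh, head?_append_cons]
        exact (head?_append_cons _ _ _).symm
      · rw [hml, getLast?_append_cons]
        have : l₁ ++ x :: (l₃ ++ x :: l₄) = (l₁ ++ x :: l₃) ++ x :: l₄ := by simp
        rw [this, getLast?_append_cons]
      · have e1 : G.weight (l₁ ++ x :: (l₃ ++ x :: l₄))
            = G.weight (l₁ ++ [x]) + (G.weight (x :: l₃ ++ [x]) + G.weight (x :: l₄)) := by
          rw [weight_append_cons]
          congr 1
          have : (x :: (l₃ ++ x :: l₄)) = (x :: l₃) ++ x :: l₄ := by simp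
          rw [this, weight_append_cons]
        have e2 : G.weight (l₁ ++ x :: l₄) = G.weight (l₁ ++ [x]) + G.weight (x :: l₄) := by
          rw [weight_append_cons]
        have h0 := weight_nonneg G hcmid
        rw [e1]
        calc G.weight m ≤ G.weight (l₁ ++ x :: l₄) := hmw
          _ ≤ _ := by rw [e2]; linarith

lemma seg_endpoints (pre mid post : List V) (x y : V) :
    (x :: mid ++ [y]).head? = some x ∧ (x :: mid ++ [y]).getLast? = some y := by
  constructor
  · rfl
  · have : x :: mid ++ [y] = (x :: mid) ++ y :: [] := by simp
    rw [this, getLast?_append_cons]; rfl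

lemma seg_isPath {l : List V} (hl : G.IsPath l) (pre mid post : List V) (x y : V)
    (hd : l = pre ++ x :: (mid ++ y :: post)) : G.IsPath (x :: mid ++ [y]) := by
  have hinfix : (x :: mid ++ [y]) <:+: l := by
    refine ⟨pre, post, ?_⟩
    rw [hd]; simp
  exact ⟨by simp, hl.2.1.infix hinfix, hinfix.sublist.nodup hl.2.2⟩

lemma seg_le {l : List V} (hl : G.IsShortest l) (pre mid post : List V) (x y : V)
    (hd : l = pre ++ x :: (mid ++ y :: post)) {l' : List V} (hp' : G.IsPath l')
    (hh : l'.head? = some x) (hg : l'.getLast? = some y) :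
    G.weight (x :: mid ++ [y]) ≤ G.weight l' := by
  obtain ⟨u, t, rfl⟩ := List.exists_cons_of_ne_nil hp'.1
  have hux : u = x := by simpa using hh
  subst u
  obtain ⟨l'', hl''⟩ : ∃ l'', x :: t = l'' ++ [y] := by
    rcases (x :: t).eq_nil_or_concat with h | ⟨L, b, hLb⟩
    · simp at h
    · have hb : b = y := by
        rw [hLb, List.concat_eq_append, List.getLast?_concat] at hg
        exact Option.some.inj hg
      exact ⟨L, by rw [hLb, hb, List.concat_eq_append]⟩
  -- decompose the chain of l
  have hcl : l.Chain' G.Adj := hl.1.2.1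
  unfold List.Chain' at hcl
  rw [hd, List.isChain_append] at hcl
  obtain ⟨hcpre, hcrest, hb1⟩ := hcl
  rw [show x :: (mid ++ y :: post) = (x :: mid ++ [y]) ++ post by simp,
    List.isChain_append] at hcrest
  obtain ⟨hcseg, hcpost, hb2⟩ := hcrest
  have hsegy : (x :: mid ++ [y]).getLast? = some y := (seg_endpoints pre mid post x y).2
  -- the spliced walk
  set m : List V := pre ++ x :: (t ++ post) with hm
  have hcm : m.Chain' G.Adj := by
    unfold List.Chain'
    rw [hm, List.isChain_append]
    refine ⟨hcpre, ?_, ?_⟩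
    · rw [show x :: (t ++ post) = (x :: t) ++ post by simp, List.isChain_append]
      refine ⟨hp'.2.1, hcpost, ?_⟩
      intro u hu v hv
      rw [hg] at hu
      simp only [Option.mem_def, Option.some.injEq] at hu
      subst hu
      exact hb2 y (by rw [hsegy]; rfl) v hv
    · intro u hu v hv
      simp only [List.head?_cons, Option.mem_def, Option.some.injEq] at hv
      subst hv
      exact hb1 u hu x rfl
  have hmne : m ≠ [] := by simp [hm]
  obtain ⟨m', hm', hmh, hml, hmw⟩ := exists_path_le G m.length m le_rfl hmne hcm
  have hle := hl.2 m' hm' ?_ ?_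
  · -- weight computations
    have e1 : G.weight l
        = G.weight (pre ++ [x]) + (G.weight (x :: mid ++ [y]) + G.weight (y :: post)) := by
      rw [hd, weight_append_cons]
      congr 1
      rw [show x :: (mid ++ y :: post) = (x :: mid) ++ y :: post by simp,
        weight_append_cons]
    have e2 : G.weight m
        = G.weight (pre ++ [x]) + (G.weight (x :: t) + G.weight (y :: post)) := by
      rw [hm, weight_append_cons]
      congr 1
      rw [show x :: (t ++ post) = (x :: t) ++ post by simp, hl'',
        show (l'' ++ [y]) ++ post = l'' ++ y :: post by simp, weight_append_cons]
    have := le_trans hle hmw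
    rw [e1, e2] at this
    linarith
  · rw [hmh, hd, hm, head?_append_cons]
    exact (head?_append_cons _ _ _).symm
  · rw [hml, hd, hm]
    rw [show pre ++ x :: (t ++ post) = (pre ++ (x :: t)) ++ post by simp, hl'',
      show (pre ++ (l'' ++ [y])) ++ post = (pre ++ l'') ++ y :: post by simp,
      getLast?_append_cons,
      show pre ++ x :: (mid ++ y :: post) = (pre ++ x :: mid) ++ y :: post by simp,
      getLast?_append_cons]

lemma isPath_reverse {l : List V} (hadj : ∀ u v, G.Adj u v → G.Adj v u)
    (h : G.IsPath l) : G.IsPath l.reverse := by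
  refine ⟨by simp [h.1], ?_, List.nodup_reverse.mpr h.2.2⟩
  unfold List.Chain'
  rw [List.isChain_reverse]
  exact h.2.1.imp fun a b hab => hadj a b hab

lemma isShortest_reverse {l : List V} (hG : G.IsUndirected) (h : G.IsShortest l) :
    G.IsShortest l.reverse := by
  refine ⟨isPath_reverse G hG.1 h.1, ?_⟩
  intro l' hp' hh hg
  rw [weight_reverse G hG.2]
  have := h.2 l'.reverse (isPath_reverse G hG.1 hp') ?_ ?_
  · calc G.weight l ≤ G.weight l'.reverse := this
      _ = G.weight l' := weight_reverse G hG.2 l'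
  · rw [List.head?_reverse, hg, List.getLast?_reverse]
  · rw [List.getLast?_reverse, hh, List.head?_reverse]

lemma pair_order {x y : V} {l : List V} (hx : x ∈ l) (hy : y ∈ l) (hxy : x ≠ y) :
    [x, y].Sublist l ∨ [y, x].Sublist l := by
  induction l with
  | nil => simp at hx
  | cons a t ih =>
    by_cases hax : a = x
    · subst hax
      have hyt : y ∈ t := by
        rcases List.mem_cons.mp hy with h | h
        · exact absurd h.symm hxy
        · exact h
      exact Or.inl ((List.singleton_sublist.mpr hyt).cons₂ a)
    · by_cases hay : a = y
      · subst hay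
        have hxt : x ∈ t := by
          rcases List.mem_cons.mp hx with h | h
          · exact absurd h hxy
          · exact h
        exact Or.inr ((List.singleton_sublist.mpr hxt).cons₂ a)
      · have hxt : x ∈ t := by
          rcases List.mem_cons.mp hx with h | h
          · exact absurd h.symm hax
          · exact h
        have hyt : y ∈ t := by
          rcases List.mem_cons.mp hy with h | h
          · exact absurd h.symm hay
          · exact h
        rcases ih hxt hyt with h | h
        · exact Or.inl (h.cons a)
        · exact Or.inr (h.cons a)

lemma triple_of_pairs {x y z : V} {l : List V} (hnd : l.Nodup)
    (h1 : [x, y].Sublist l) (h2 : [y, z].Sublist l) : [x, y, z].Sublist l := by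
  induction l with
  | nil => simp at h1
  | cons a t ih =>
    have hat : a ∉ t := (List.nodup_cons.mp hnd).1
    have hndt : t.Nodup := (List.nodup_cons.mp hnd).2
    cases h1 with
    | cons _ h1' =>
      have hyt : y ∈ t := h1'.subset (by simp)
      have h2' : [y, z].Sublist t := by
        cases h2 with
        | cons _ h => exact h
        | cons_cons _ h => exact absurd hyt hat
      exact (ih hndt h1' h2').cons a
    | cons_cons _ h1' =>
      have hyt : y ∈ t := h1'.subset (by simp)
      have h2' : [y, z].Sublist t := by
        cases h2 with
        | cons _ h => exact h
        | cons_cons _ h => exact absurd hyt hat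
      exact h2'.cons₂ _

lemma triple_split {x y z : V} {l : List V} (h : [x, y, z].Sublist l) :
    ∃ A B C D, l = A ++ x :: (B ++ y :: (C ++ z :: D)) := by
  obtain ⟨A, l₂, rfl, h2⟩ := sublist_split h
  obtain ⟨B, l₃, rfl, h3⟩ := sublist_split h2
  obtain ⟨C, D, rfl, -⟩ := sublist_split h3
  exact ⟨A, B, C, D, rfl⟩

lemma bad_mid {P Q : List V} {a b c : V} (hP : G.IsShortest P) (hQ : G.IsShortest Q)
    (habc : [a, b, c].Sublist P) (hacb : [a, c, b].Sublist Q) : False := by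
  obtain ⟨A, B, C, D, hPd⟩ := triple_split habc
  obtain ⟨E, F, G', H, hQd⟩ := triple_split hacb
  have hdPac : P = A ++ a :: ((B ++ b :: C) ++ c :: D) := by rw [hPd]; simp
  have hdQab : Q = E ++ a :: ((F ++ c :: G') ++ b :: H) := by rw [hQd]; simp
  have hPab := seg_isPath G hP.1 A B (C ++ c :: D) a b hPd
  have hPbc := seg_isPath G hP.1 (A ++ a :: B) C D b c (by rw [hPd]; simp)
  have hQac := seg_isPath G hQ.1 E F (G' ++ b :: H) a c hQd
  have hQcb := seg_isPath G hQ.1 (E ++ a :: F) G' H c b (by rw [hQd]; simp)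
  have h1 : G.weight (a :: (F ++ c :: G') ++ [b]) ≤ G.weight (a :: B ++ [b]) :=
    seg_le G hQ E (F ++ c :: G') H a b hdQab hPab
      (seg_endpoints [] B [] a b).1 (seg_endpoints [] B [] a b).2
  have h2 : G.weight (a :: (B ++ b :: C) ++ [c]) ≤ G.weight (a :: F ++ [c]) :=
    seg_le G hP A (B ++ b :: C) D a c hdPac hQac
      (seg_endpoints [] F [] a c).1 (seg_endpoints [] F [] a c).2
  have wQab : G.weight (a :: (F ++ c :: G') ++ [b])
      = G.weight (a :: F ++ [c]) + G.weight (c :: G' ++ [b]) := by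
    rw [show a :: (F ++ c :: G') ++ [b] = (a :: F) ++ c :: (G' ++ [b]) by simp,
      weight_append_cons]
    simp
  have wPac : G.weight (a :: (B ++ b :: C) ++ [c])
      = G.weight (a :: B ++ [b]) + G.weight (b :: C ++ [c]) := by
    rw [show a :: (B ++ b :: C) ++ [c] = (a :: B) ++ b :: (C ++ [c]) by simp,
      weight_append_cons]
    simp
  have h4 : 0 ≤ G.weight (b :: C ++ [c]) := weight_nonneg G hPbc.2.1
  have h5 : 0 < G.weight (c :: G' ++ [b]) := by
    rw [show c :: G' ++ [b] = c :: (G' ++ [b]) by simp]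
    rw [show c :: G' ++ [b] = c :: (G' ++ [b]) by simp] at hQcb
    exact weight_pos G hQcb.2.1 (by simp)
  linarith

lemma bad_left {P Q : List V} {a b c : V} (hP : G.IsShortest P) (hQ : G.IsShortest Q)
    (habc : [a, b, c].Sublist P) (hbac : [b, a, c].Sublist Q) : False := by
  obtain ⟨A, B, C, D, hPd⟩ := triple_split habc
  obtain ⟨E, F, G', H, hQd⟩ := triple_split hbac
  have hdPac : P = A ++ a :: ((B ++ b :: C) ++ c :: D) := by rw [hPd]; simp
  have hdQbc : Q = E ++ b :: ((F ++ a :: G') ++ c :: H) := by rw [hQd]; simp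
  have hPbc := seg_isPath G hP.1 (A ++ a :: B) C D b c (by rw [hPd]; simp)
  have hPab := seg_isPath G hP.1 A B (C ++ c :: D) a b hPd
  have hQac := seg_isPath G hQ.1 (E ++ b :: F) G' H a c (by rw [hQd]; simp)
  have hQba := seg_isPath G hQ.1 E F (G' ++ c :: H) b a hQd
  have h1 : G.weight (b :: (F ++ a :: G') ++ [c]) ≤ G.weight (b :: C ++ [c]) :=
    seg_le G hQ E (F ++ a :: G') H b c hdQbc hPbc
      (seg_endpoints [] C [] b c).1 (seg_endpoints [] C [] b c).2
  have h2 : G.weight (a :: (B ++ b :: C) ++ [c]) ≤ G.weight (a :: G' ++ [c]) :=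
    seg_le G hP A (B ++ b :: C) D a c hdPac hQac
      (seg_endpoints [] G' [] a c).1 (seg_endpoints [] G' [] a c).2
  have wQbc : G.weight (b :: (F ++ a :: G') ++ [c])
      = G.weight (b :: F ++ [a]) + G.weight (a :: G' ++ [c]) := by
    rw [show b :: (F ++ a :: G') ++ [c] = (b :: F) ++ a :: (G' ++ [c]) by simp,
      weight_append_cons]
    simp
  have wPac : G.weight (a :: (B ++ b :: C) ++ [c])
      = G.weight (a :: B ++ [b]) + G.weight (b :: C ++ [c]) := by
    rw [show a :: (B ++ b :: C) ++ [c] = (a :: B) ++ b :: (C ++ [c]) by simp,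
      weight_append_cons]
    simp
  have h4 : 0 ≤ G.weight (a :: B ++ [b]) := weight_nonneg G hPab.2.1
  have h5 : 0 < G.weight (b :: F ++ [a]) := by
    rw [show b :: F ++ [a] = b :: (F ++ [a]) by simp]
    rw [show b :: F ++ [a] = b :: (F ++ [a]) by simp] at hQba
    exact weight_pos G hQba.2.1 (by simp)
  linarith

end SPO

/-- Shortest path orderings: in an undirected positively-weighted graph, if `a`, `b`,
`c` appear in that order on some shortest path `P`, then on any shortest path `Q`
through all three of these vertices, `b` appears between `a` and `c`. -/
theorem shortest_path_orderings {V : Type*} (G : WeightedGraph V)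
    (hG : G.IsUndirected) (P Q : List V) (a b c : V)
    (hP : G.IsShortest P) (habc : List.Sublist [a, b, c] P)
    (hQ : G.IsShortest Q) (haQ : a ∈ Q) (hbQ : b ∈ Q) (hcQ : c ∈ Q) :
    List.Sublist [a, b, c] Q ∨ List.Sublist [c, b, a] Q := by
  have hnd3 : ([a, b, c] : List V).Nodup := habc.nodup hP.1.2.2
  simp only [List.nodup_cons, List.mem_cons, List.mem_singleton, List.not_mem_nil,
    or_false, not_or, List.nodup_nil, and_true] at hnd3
  obtain ⟨⟨hab, hac⟩, hbc, -⟩ := hnd3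
  have hQnd : Q.Nodup := hQ.1.2.2
  rcases SPO.pair_order haQ hbQ hab with hab' | hab'
  · rcases SPO.pair_order hbQ hcQ hbc with hbc' | hbc'
    · exact Or.inl (SPO.triple_of_pairs hQnd hab' hbc')
    · rcases SPO.pair_order haQ hcQ hac with hac' | hac'
      · exact (SPO.bad_mid G hP hQ habc (SPO.triple_of_pairs hQnd hac' hbc')).elim
      · have h := SPO.triple_of_pairs hQnd hac' hab'
        have h' : List.Sublist [b, a, c] Q.reverse := by simpa using h.reverse
        exact (SPO.bad_left G hP (SPO.isShortest_reverse G hG hQ) habc h').elim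
  · rcases SPO.pair_order hbQ hcQ hbc with hbc' | hbc'
    · rcases SPO.pair_order haQ hcQ hac with hac' | hac'
      · exact (SPO.bad_left G hP hQ habc (SPO.triple_of_pairs hQnd hab' hac')).elim
      · have h := SPO.triple_of_pairs hQnd hbc' hac'
        have h' : List.Sublist [a, c, b] Q.reverse := by simpa using h.reverse
        exact (SPO.bad_mid G hP (SPO.isShortest_reverse G hG hQ) habc h').elim
    · exact Or.inr (SPO.triple_of_pairs hQnd hbc' hab')
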